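/- arXiv:1405.1899 — 3 statements merged into one kernel-verified Lean document; each statement's English description precedes it below -/
import Mathlib

section
/- Suppose that T is a subgroup of a finite group H such that its normal closure ⟨T^H⟩ is equal to an (internal) direct product of conjugates of T, say ⟨T^H⟩ = T^{x_1} × ... × T^{x_n}, such that every conjugate of T appears among these factors (i.e. T^y ∈ {T^{x_1}, ..., T^{x_n}} for every y ∈ H), and suppose H = F*(H)⟨T^H⟩. Then either T is normal in H, or T is a p-group for some prime p. -/
open Subgroup
open scoped commutatorElement

/-- The conjugate of a subgroup: `S ^ g = { g s g⁻¹ }`. -/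
def conjSubgroup {G : Type*} [Group G] (g : G) (S : Subgroup G) : Subgroup G :=
  S.map (MulAut.conj g).toMonoidHom

/-- A subgroup is subnormal if it can be joined to the whole group by a chain
of successive normal inclusions. -/
def Subgroup.IsSubnormal' {G : Type*} [Group G] (H : Subgroup G) : Prop :=
  ∃ (n : ℕ) (c : Fin (n + 1) → Subgroup G), c 0 = H ∧ c (Fin.last n) = ⊤ ∧
    ∀ i : Fin n, c i.castSucc ≤ c i.succ ∧
      ∀ x ∈ c i.succ, ∀ h ∈ c i.castSucc, x * h * x⁻¹ ∈ c i.castSucc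

/-- A group is quasisimple if it is perfect and its central quotient is a
nonabelian simple group. -/
def IsQuasisimple (Q : Type*) [Group Q] : Prop :=
  commutator Q = ⊤ ∧ IsSimpleGroup (Q ⧸ Subgroup.center Q) ∧
    ∃ a b : Q ⧸ Subgroup.center Q, a * b ≠ b * a

/-- The Fitting subgroup: the product (join) of all nilpotent normal subgroups. -/
def fittingSubgroup (G : Type*) [Group G] : Subgroup G :=
  sSup {H : Subgroup G | H.Normal ∧ Group.IsNilpotent H}

/-- The generalized Fitting subgroup `F*(G)`: the product of the Fitting subgroup
and all subnormal quasisimple subgroups. -/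
def generalizedFitting (G : Type*) [Group G] : Subgroup G :=
  fittingSubgroup G ⊔ sSup {Q : Subgroup G | Q.IsSubnormal' ∧ IsQuasisimple Q}

open scoped Classical in
/-- The generalized Fitting series, `F*_0(G) = 1` and `F*_{i+1}(G)` the preimage
of `F*(G / F*_i(G))`. (The terms of the series are indeed normal, so the `⊤`
default branch is never taken.) -/
noncomputable def generalizedFittingSeries (G : Type*) [Group G] : ℕ → Subgroup G
  | 0 => ⊥
  | n + 1 =>
    if h : (generalizedFittingSeries G n).Normal then
      letI := h
      (generalizedFitting (G ⧸ generalizedFittingSeries G n)).comap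
        (QuotientGroup.mk' (generalizedFittingSeries G n))
    else ⊤

/-- The generalized Fitting height `h*(G)`: the least `h` with `F*_h(G) = G`. -/
noncomputable def generalizedFittingHeight (G : Type*) [Group G] : ℕ :=
  sInf {h : ℕ | generalizedFittingSeries G h = ⊤}

open scoped Classical in
/-- The Fitting series. -/
noncomputable def fittingSeries (G : Type*) [Group G] : ℕ → Subgroup G
  | 0 => ⊥
  | n + 1 =>
    if h : (fittingSeries G n).Normal then
      letI := h
      (fittingSubgroup (G ⧸ fittingSeries G n)).comap
        (QuotientGroup.mk' (fittingSeries G n))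
    else ⊤

/-- The Fitting height. -/
noncomputable def fittingHeight (G : Type*) [Group G] : ℕ :=
  sInf {h : ℕ | fittingSeries G h = ⊤}

/-- The derived length: the least `n` with `G^{(n)} = 1`. -/
noncomputable def derivedLength (G : Type*) [Group G] : ℕ :=
  sInf {n : ℕ | derivedSeries G n = ⊥}

/-- The soluble radical: the product (join) of all soluble normal subgroups. -/
def solubleRadical (G : Type*) [Group G] : Subgroup G :=
  sSup {H : Subgroup G | H.Normal ∧ IsSolvable H}

/-- A group is an (internal) direct product of nonabelian simple groups. -/
def IsProdOfNonabelianSimples (Q : Type*) [Group Q] : Prop :=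
  ∃ (m : ℕ) (S : Fin m → Subgroup Q),
    (∀ i, (S i).Normal) ∧ (∀ i, IsSimpleGroup (S i)) ∧
    (∀ i, ∃ a b : S i, a * b ≠ b * a) ∧
    iSupIndep S ∧ iSup S = ⊤

/-- The section `M/N` (for `N ≤ M` with `N.subgroupOf M` normal) is soluble. -/
def SectionIsSolvable {G : Type*} [Group G] (N M : Subgroup G) : Prop :=
  N ≤ M ∧ ∃ _h : (N.subgroupOf M).Normal, IsSolvable (M ⧸ N.subgroupOf M)

/-- The section `M/N` is a direct product of nonabelian simple groups. -/
def SectionIsProdOfNonabelianSimples {G : Type*} [Group G] (N M : Subgroup G) : Prop :=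
  N ≤ M ∧ ∃ _h : (N.subgroupOf M).Normal,
    IsProdOfNonabelianSimples (M ⧸ N.subgroupOf M)

/-- The nonsoluble length `λ(G)`: the least number of nonsoluble factors in a
normal series each of whose factors either is soluble or is a direct product of
nonabelian simple groups. -/
noncomputable def nonsolubleLength (G : Type*) [Group G] : ℕ :=
  sInf {n : ℕ | ∃ (k : ℕ) (N : Fin (k + 1) → Subgroup G), Monotone N ∧
    N 0 = ⊥ ∧ N (Fin.last k) = ⊤ ∧ (∀ i, (N i).Normal) ∧
    (∀ i : Fin k, SectionIsSolvable (N i.castSucc) (N i.succ) ∨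
      SectionIsProdOfNonabelianSimples (N i.castSucc) (N i.succ)) ∧
    n = Nat.card {i : Fin k // ¬ SectionIsSolvable (N i.castSucc) (N i.succ)}}

lemma aux_mem_conjSubgroup {G : Type*} [Group G] {g y : G} {S : Subgroup G} :
    y ∈ conjSubgroup g S ↔ ∃ s ∈ S, g * s * g⁻¹ = y := by
  simp [conjSubgroup, Subgroup.mem_map]

lemma aux_conjSubgroup_one {G : Type*} [Group G] (S : Subgroup G) :
    conjSubgroup (1 : G) S = S := by
  ext y; simp [aux_mem_conjSubgroup]

lemma aux_mem_normalizer_of_conj {G : Type*} [Group G] {g : G} {S : Subgroup G}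
    (h : conjSubgroup g S = S) : g ∈ Subgroup.normalizer (S : Set G) := by
  rw [Subgroup.mem_normalizer_iff]
  intro t
  constructor
  · intro ht
    have : g * t * g⁻¹ ∈ conjSubgroup g S := aux_mem_conjSubgroup.mpr ⟨t, ht, rfl⟩
    rwa [h] at this
  · intro ht
    rw [← h] at ht
    obtain ⟨s, hs, hse⟩ := aux_mem_conjSubgroup.mp ht
    rw [mul_assoc, mul_assoc] at hse
    have hst : s = t := mul_right_cancel (mul_left_cancel hse)
    rwa [← hst]

lemma IsQuasisimple.normal_le_center {Q : Type*} [Group Q] (hQ : IsQuasisimple Q)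
    (A : Subgroup Q) (hA : A.Normal) (hne : A ≠ ⊤) : A ≤ Subgroup.center Q := by
  obtain ⟨hperf, hsimp, -⟩ := hQ
  haveI := hsimp
  set π := QuotientGroup.mk' (Subgroup.center Q) with hπ
  have hsurj : Function.Surjective π := QuotientGroup.mk'_surjective _
  have hn : (A.map π).Normal := Subgroup.Normal.map hA π hsurj
  rcases hn.eq_bot_or_eq_top with h | h
  · intro a ha
    have hmem : π a ∈ A.map π := Subgroup.mem_map_of_mem _ ha
    rw [h, Subgroup.mem_bot, QuotientGroup.mk'_apply] at hmem
    exact (QuotientGroup.eq_one_iff a).mp hmem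
  · exfalso; apply hne
    have key : ∀ q : Q, ∃ a ∈ A, a⁻¹ * q ∈ Subgroup.center Q := by
      intro q
      have : π q ∈ A.map π := by rw [h]; trivial
      obtain ⟨a, ha, haq⟩ := this
      refine ⟨a, ha, ?_⟩
      have h1 : π (a⁻¹ * q) = 1 := by
        rw [map_mul, map_inv, haq, inv_mul_cancel]
      rw [QuotientGroup.mk'_apply] at h1
      exact (QuotientGroup.eq_one_iff _).mp h1
    rw [eq_top_iff, ← hperf, _root_.commutator_def, Subgroup.commutator_le]
    intro g₁ _ g₂ _
    obtain ⟨a, ha, hz⟩ := key g₁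
    obtain ⟨b, hb, hw⟩ := key g₂
    set z := a⁻¹ * g₁ with hzdef
    set w := b⁻¹ * g₂ with hwdef
    have hg₁ : g₁ = a * z := by rw [hzdef, ← mul_assoc, mul_inv_cancel, one_mul]
    have hg₂ : g₂ = b * w := by rw [hwdef, ← mul_assoc, mul_inv_cancel, one_mul]
    haveI := hA
    set ρ := QuotientGroup.mk' A with hρ
    have hρa : ρ a = 1 := by rw [hρ, QuotientGroup.mk'_apply]; exact (QuotientGroup.eq_one_iff a).mpr ha
    have hρb : ρ b = 1 := by rw [hρ, QuotientGroup.mk'_apply]; exact (QuotientGroup.eq_one_iff b).mpr hb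
    have hzw : z * w = w * z := ((Subgroup.mem_center_iff.mp hz) w).symm
    have hone : ρ ⁅g₁, g₂⁆ = 1 := by
      rw [map_commutatorElement]
      have e1 : ρ g₁ = ρ z := by rw [hg₁, map_mul, hρa, one_mul]
      have e2 : ρ g₂ = ρ w := by rw [hg₂, map_mul, hρb, one_mul]
      rw [e1, e2, ← map_commutatorElement, commutatorElement_eq_one_iff_mul_comm.mpr hzw,
        map_one]
    rw [hρ, QuotientGroup.mk'_apply] at hone
    exact (QuotientGroup.eq_one_iff _).mp hone

lemma aux_perfect_subgroup {G : Type*} [Group G] {Q : Subgroup G} (hQ : IsQuasisimple ↥Q) :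
    ⁅Q, Q⁆ = Q := by
  have htop : Subgroup.map Q.subtype ⊤ = Q :=
    (MonoidHom.range_eq_map _).symm.trans (Subgroup.range_subtype Q)
  have h1 : Subgroup.map Q.subtype (_root_.commutator ↥Q) = ⁅Q, Q⁆ := by
    rw [_root_.commutator_def, Subgroup.map_commutator, htop]
  rw [← h1, hQ.1, htop]

lemma aux_quasisimple_commutator_bot {G : Type*} [Group G] (Q A : Subgroup G)
    (hQ : IsQuasisimple ↥Q) (hAQ : A ≤ Q)
    (hnorm : ∀ q ∈ Q, ∀ a ∈ A, q * a * q⁻¹ ∈ A) (hne : A ≠ Q) : ⁅Q, A⁆ = ⊥ := by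
  have hA' : (A.subgroupOf Q).Normal := by
    constructor
    rintro ⟨a, haQ⟩ ha ⟨q, hq⟩
    rw [Subgroup.mem_subgroupOf] at ha ⊢
    exact hnorm q hq a ha
  have hne' : A.subgroupOf Q ≠ ⊤ := by
    intro h
    exact hne (le_antisymm hAQ (Subgroup.subgroupOf_eq_top.mp h))
  have hcent := hQ.normal_le_center _ hA' hne'
  rw [eq_bot_iff]
  rw [Subgroup.commutator_le]
  intro q hq a ha
  rw [Subgroup.mem_bot, commutatorElement_eq_one_iff_mul_comm]
  have hmem : (⟨a, hAQ ha⟩ : ↥Q) ∈ A.subgroupOf Q := by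
    rw [Subgroup.mem_subgroupOf]; exact ha
  have := (Subgroup.mem_center_iff.mp (hcent hmem)) ⟨q, hq⟩
  exact congrArg Subtype.val this

lemma aux_component_centralizes {G : Type*} [Group G] (Q N : Subgroup G)
    (hsn : Q.IsSubnormal') (hQ : IsQuasisimple ↥Q) (hN : N.Normal) (hQN : ¬ Q ≤ N) :
    ⁅Q, N⁆ = ⊥ := by
  obtain ⟨n, c, hc0, hclast, hchain⟩ := hsn
  have hQle : ∀ (k : ℕ) (hk : k < n + 1), Q ≤ c ⟨k, hk⟩ := by
    intro k
    induction k with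
    | zero =>
      intro hk
      rw [Fin.mk_zero, hc0]
    | succ m ih =>
      intro hk
      have hmn : m < n := Nat.lt_of_succ_lt_succ hk
      have hm : m < n + 1 := Nat.lt_of_succ_lt hk
      have hstep := (hchain ⟨m, hmn⟩).1
      rw [Fin.castSucc_mk, Fin.succ_mk] at hstep
      exact le_trans (ih hm) hstep
  have key : ∀ (k : ℕ) (hk : k < n + 1), ⁅Q, N ⊓ c ⟨k, hk⟩⁆ = ⊥ := by
    intro k
    induction k with
    | zero =>
      intro hk
      rw [Fin.mk_zero, hc0]
      apply aux_quasisimple_commutator_bot Q (N ⊓ Q) hQ inf_le_right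
      · intro q hq a ha
        exact ⟨hN.conj_mem _ ha.1 q, Q.mul_mem (Q.mul_mem hq ha.2) (Q.inv_mem hq)⟩
      · intro h
        exact hQN (h ▸ inf_le_left)
    | succ m ih =>
      intro hk
      have hmn : m < n := Nat.lt_of_succ_lt_succ hk
      have hm : m < n + 1 := Nat.lt_of_succ_lt hk
      have hBle : ⁅Q, N ⊓ c ⟨m + 1, hk⟩⁆ ≤ N ⊓ c ⟨m, hm⟩ := by
        rw [Subgroup.commutator_le]
        intro q hq b hb
        constructor
        · have h1 : ⁅q, b⁆ = (q * b * q⁻¹) * b⁻¹ := by group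
          rw [h1]
          exact N.mul_mem (hN.conj_mem _ hb.1 q) (N.inv_mem hb.1)
        · have hchain2 := (hchain ⟨m, hmn⟩).2
          rw [Fin.castSucc_mk, Fin.succ_mk] at hchain2
          have h2 := hchain2 b hb.2 q⁻¹ ((c ⟨m, hm⟩).inv_mem (hQle m hm hq))
          have h1 : ⁅q, b⁆ = q * (b * q⁻¹ * b⁻¹) := by group
          rw [h1]
          exact (c ⟨m, hm⟩).mul_mem (hQle m hm hq) h2
      have h3 : ⁅⁅Q, N ⊓ c ⟨m + 1, hk⟩⁆, Q⁆ = ⊥ := by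
        rw [eq_bot_iff]
        calc ⁅⁅Q, N ⊓ c ⟨m + 1, hk⟩⁆, Q⁆ ≤ ⁅N ⊓ c ⟨m, hm⟩, Q⁆ :=
              Subgroup.commutator_mono hBle le_rfl
          _ = ⁅Q, N ⊓ c ⟨m, hm⟩⁆ := Subgroup.commutator_comm _ _
          _ ≤ ⊥ := le_of_eq (ih hm)
      have h4 : ⁅⁅N ⊓ c ⟨m + 1, hk⟩, Q⁆, Q⁆ = ⊥ := by
        rw [Subgroup.commutator_comm (N ⊓ c ⟨m + 1, hk⟩) Q]; exact h3
      have h5 := Subgroup.commutator_commutator_eq_bot_of_rotate h3 h4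
      rwa [aux_perfect_subgroup hQ] at h5
  have hfin := key n (Nat.lt_succ_self n)
  have hlast : (⟨n, Nat.lt_succ_self n⟩ : Fin (n + 1)) = Fin.last n := rfl
  rwa [hlast, hclast, inf_top_eq] at hfin

lemma aux_exists_primePow_not_mem {G : Type*} [Group G] [Finite G] (K : Subgroup G) :
    ∀ (m : ℕ) (g : G), orderOf g = m → g ∉ K →
      ∃ (p : ℕ) (h : G), p.Prime ∧ h ∈ Subgroup.zpowers g ∧ h ∉ K ∧ ∃ k, orderOf h = p ^ k := by
  intro m
  induction m using Nat.strong_induction_on with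
  | _ m ih =>
    intro g hord hg
    have hm0 : m ≠ 0 := by
      rw [← hord]
      exact (orderOf_pos g).ne'
    by_cases hpp : IsPrimePow m
    · obtain ⟨p, k, hp, hk, hpk⟩ := hpp
      exact ⟨p, g, Nat.prime_iff.mpr hp, Subgroup.mem_zpowers g, hg, k, by rw [hord, hpk]⟩
    · have hm1 : m ≠ 1 := by
        intro h1
        rw [h1, orderOf_eq_one_iff] at hord
        exact hg (hord ▸ K.one_mem)
      set p := m.minFac with hpdef
      have hp : p.Prime := Nat.minFac_prime hm1
      set a := p ^ m.factorization p with hadef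
      set b := m / a with hbdef
      have hab : a * b = m := Nat.ordProj_mul_ordCompl_eq_self m p
      have hcop : Nat.Coprime a b :=
        Nat.Coprime.pow_left _ (Nat.coprime_ordCompl hp hm0)
      have ha1 : 1 < a := by
        have hv : 0 < m.factorization p :=
          Nat.Prime.factorization_pos_of_dvd hp hm0 (Nat.minFac_dvd m)
        exact Nat.one_lt_pow hv.ne' hp.one_lt
      have hb0 : b ≠ 0 := by
        intro h
        rw [h, mul_zero] at hab
        exact hm0 hab.symm
      have hbm : b < m := by
        rw [hbdef]
        exact Nat.div_lt_self (Nat.pos_of_ne_zero hm0) ha1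
      have ha0 : a ≠ 0 := pow_ne_zero _ hp.pos.ne'
      have ham : a < m := by
        rcases lt_or_eq_of_le (Nat.le_of_dvd (Nat.pos_of_ne_zero hm0) ⟨b, hab.symm⟩) with h | h
        · exact h
        · exfalso
          apply hpp
          refine ⟨p, m.factorization p, hp.prime,
            Nat.Prime.factorization_pos_of_dvd hp hm0 (Nat.minFac_dvd m), ?_⟩
          rw [← hadef]; exact h
      obtain ⟨u, v, huv⟩ := Nat.isCoprime_iff_coprime.mpr hcop
      set h1 := (g ^ a) ^ u with hh1
      set h2 := (g ^ b) ^ v with hh2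
      have hguv : h1 * h2 = g := by
        rw [hh1, hh2, ← zpow_natCast g a, ← zpow_natCast g b, ← zpow_mul, ← zpow_mul,
          ← zpow_add, mul_comm (a : ℤ) u, mul_comm (b : ℤ) v]
        rw [huv, zpow_one]
      have hpow1 : h1 ^ b = 1 := by
        rw [hh1, ← zpow_natCast ((g ^ a) ^ u) b, ← zpow_mul, mul_comm u (b : ℤ), zpow_mul,
          zpow_natCast, ← pow_mul, hab, ← hord, pow_orderOf_eq_one, one_zpow]
      have hpow2 : h2 ^ a = 1 := by
        rw [hh2, ← zpow_natCast ((g ^ b) ^ v) a, ← zpow_mul, mul_comm v (a : ℤ), zpow_mul,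
          zpow_natCast, ← pow_mul, mul_comm b a, hab, ← hord, pow_orderOf_eq_one, one_zpow]
      have hcase : h1 ∉ K ∨ h2 ∉ K := by
        by_contra hcon
        push_neg at hcon
        exact hg (hguv ▸ K.mul_mem hcon.1 hcon.2)
      have hz1 : h1 ∈ Subgroup.zpowers g := by
        rw [hh1, ← zpow_natCast g a, ← zpow_mul]
        exact Subgroup.zpow_mem_zpowers g _
      have hz2 : h2 ∈ Subgroup.zpowers g := by
        rw [hh2, ← zpow_natCast g b, ← zpow_mul]
        exact Subgroup.zpow_mem_zpowers g _
      rcases hcase with hc | hc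
      · have hdvd : orderOf h1 ∣ b := orderOf_dvd_of_pow_eq_one hpow1
        have hlt : orderOf h1 < m :=
          lt_of_le_of_lt (Nat.le_of_dvd (Nat.pos_of_ne_zero hb0) hdvd) hbm
        obtain ⟨q, h, hq, hhz, hhK, hk⟩ := ih (orderOf h1) hlt h1 rfl hc
        refine ⟨q, h, hq, ?_, hhK, hk⟩
        obtain ⟨k, hk'⟩ := hhz
        rw [← hk']
        exact Subgroup.zpow_mem _ hz1 k
      · have hdvd : orderOf h2 ∣ a := orderOf_dvd_of_pow_eq_one hpow2
        have hlt : orderOf h2 < m :=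
          lt_of_le_of_lt (Nat.le_of_dvd (Nat.pos_of_ne_zero ha0) hdvd) ham
        obtain ⟨q, h, hq, hhz, hhK, hk⟩ := ih (orderOf h2) hlt h2 rfl hc
        refine ⟨q, h, hq, ?_, hhK, hk⟩
        obtain ⟨k, hk'⟩ := hhz
        rw [← hk']
        exact Subgroup.zpow_mem _ hz2 k

lemma aux_conj_pow {G : Type*} [Group G] (g x : G) (n : ℕ) :
    (g * x * g⁻¹) ^ n = g * x ^ n * g⁻¹ := by
  induction n with
  | zero => simp
  | succ k ihk => rw [pow_succ, pow_succ, ihk]; group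

lemma aux_normal_psubgroup {G : Type*} [Group G] [Finite G] (M : Subgroup G)
    (hMn : M.Normal) (hMnil : Group.IsNilpotent ↥M) {p : ℕ} (hp : p.Prime)
    (h : G) (hhM : h ∈ M) (hord : ∃ k, orderOf h = p ^ k) :
    ∃ P : Subgroup G, P.Normal ∧ h ∈ P ∧ ∀ s ∈ P, ∃ k, s ^ p ^ k = 1 := by
  haveI : Fact p.Prime := ⟨hp⟩
  have hSyl := ((isNilpotent_of_finite_tfae (G := ↥M)).out 0 3).mp hMnil
  obtain ⟨P⟩ : Nonempty (Sylow p ↥M) := inferInstance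
  have hPn : (P : Subgroup ↥M).Normal := hSyl p ⟨hp⟩ P
  have claim1 : ∀ y : ↥M, (∃ k, y ^ p ^ k = 1) → y ∈ (P : Subgroup ↥M) := by
    intro y hy
    obtain ⟨k0, hk0⟩ := hy
    have hpg : IsPGroup p (Subgroup.zpowers y) := by
      rintro ⟨q, hq⟩
      obtain ⟨j, hj⟩ := Subgroup.mem_zpowers_iff.mp hq
      refine ⟨k0, ?_⟩
      apply Subtype.ext
      have hq1 : q ^ p ^ k0 = 1 := by
        rw [← hj, ← zpow_natCast (y ^ j) (p ^ k0), ← zpow_mul,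
          mul_comm j ((p ^ k0 : ℕ) : ℤ), zpow_mul, zpow_natCast, hk0, one_zpow]
      simpa using hq1
    obtain ⟨Q, hQ⟩ := hpg.exists_le_sylow
    haveI := Sylow.unique_of_normal P hPn
    have hQP : Q = P := Subsingleton.elim _ _
    rw [hQP] at hQ
    exact hQ (Subgroup.mem_zpowers y)
  have claim2 : ∀ y : ↥M, y ∈ (P : Subgroup ↥M) → ∃ k, y ^ p ^ k = 1 := by
    intro y hy
    obtain ⟨k, hk⟩ := P.isPGroup' ⟨y, hy⟩
    exact ⟨k, by simpa using congrArg Subtype.val hk⟩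
  refine ⟨(P : Subgroup ↥M).map M.subtype, ?_, ?_, ?_⟩
  · constructor
    intro x hx g
    obtain ⟨mm, hmP, rfl⟩ := hx
    have hgm : g * (mm : G) * g⁻¹ ∈ M := hMn.conj_mem mm mm.2 g
    refine ⟨⟨_, hgm⟩, claim1 _ ?_, rfl⟩
    obtain ⟨k, hk⟩ := claim2 mm hmP
    refine ⟨k, ?_⟩
    apply Subtype.ext
    have hc : ((mm : G)) ^ (p ^ k) = 1 := by
      simpa using congrArg Subtype.val hk
    show ((⟨g * (mm : G) * g⁻¹, hgm⟩ : ↥M) ^ p ^ k : ↥M).1 = 1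
    rw [SubmonoidClass.coe_pow]
    show (g * (mm : G) * g⁻¹) ^ p ^ k = 1
    rw [aux_conj_pow, hc, mul_one, mul_inv_cancel]
  · refine ⟨⟨h, hhM⟩, claim1 _ ?_, rfl⟩
    obtain ⟨k, hk⟩ := hord
    refine ⟨k, ?_⟩
    apply Subtype.ext
    rw [SubmonoidClass.coe_pow]
    show h ^ p ^ k = 1
    rw [← hk, pow_orderOf_eq_one]
  · intro s hs
    obtain ⟨mm, hm, rfl⟩ := hs
    obtain ⟨k, hk⟩ := claim2 mm hm
    exact ⟨k, by simpa using congrArg Subtype.val hk⟩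

lemma aux_mem_normalizer_of_commute {G : Type*} [Group G] {T : Subgroup G} {a : G}
    (hc : ∀ s ∈ T, a * s = s * a) : a ∈ Subgroup.normalizer (T : Set G) := by
  rw [Subgroup.mem_normalizer_iff]
  intro t
  constructor
  · intro ht
    have h1 : a * t * a⁻¹ = t := by rw [hc t ht]; group
    rw [h1]; exact ht
  · intro ht
    have h2 := hc _ ht
    have ht' : t = a⁻¹ * (a * t * a⁻¹) * a := by group
    rw [ht']
    have h3 : a⁻¹ * (a * t * a⁻¹) * a = a * t * a⁻¹ := by
      calc a⁻¹ * (a * t * a⁻¹) * a = a⁻¹ * ((a * t * a⁻¹) * a) := by rw [mul_assoc]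
        _ = a⁻¹ * (a * (a * t * a⁻¹)) := by rw [← h2]
        _ = a * t * a⁻¹ := by group
    rw [h3]; exact ht

/-- **Lemma 2.2.** Suppose `T` is a subgroup of a finite group `H` whose normal
closure `⟨T^H⟩` is the direct product of conjugates `T^{x 1} × ⋯ × T^{x n}`,
every conjugate of `T` appears among these factors, and `H = F*(H)⟨T^H⟩`.
Then either `T` is normal in `H`, or `T` is a `p`-group for some prime `p`. -/
theorem normal_or_isPGroup_of_normalClosure_eq_directProduct
    {H : Type*} [Group H] [Finite H] (T : Subgroup H) (n : ℕ) (x : Fin n → H)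
    (hclosure : Subgroup.normalClosure (T : Set H) = ⨆ i, conjSubgroup (x i) T)
    (hindep : iSupIndep fun i => conjSubgroup (x i) T)
    (hcomm : ∀ i j, i ≠ j →
      ∀ a ∈ conjSubgroup (x i) T, ∀ b ∈ conjSubgroup (x j) T, a * b = b * a)
    (hall : ∀ y : H, ∃ i, conjSubgroup y T = conjSubgroup (x i) T)
    (hfact : generalizedFitting H ⊔ Subgroup.normalClosure (T : Set H) = ⊤) :
    T.Normal ∨ ∃ p : ℕ, p.Prime ∧ IsPGroup p T := by
  by_cases hTn : T.Normal
  · exact Or.inl hTn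
  right
  obtain ⟨j, hj⟩ := hall 1
  have hjT : conjSubgroup (x j) T = T := by rw [← hj, aux_conjSubgroup_one]
  have hNK : Subgroup.normalClosure (T : Set H) ≤ Subgroup.normalizer (T : Set H) := by
    rw [hclosure]
    apply iSup_le
    intro i
    by_cases hiT : conjSubgroup (x i) T = T
    · rw [hiT]; exact Subgroup.le_normalizer
    · have hij : i ≠ j := by rintro rfl; exact hiT hjT
      intro a ha
      apply aux_mem_normalizer_of_commute
      intro s hs
      exact hcomm i j hij a ha s (by rw [hjT]; exact hs)
  have hQK : sSup {Q : Subgroup H | Q.IsSubnormal' ∧ IsQuasisimple ↥Q} ≤ Subgroup.normalizer (T : Set H) := by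
    apply sSup_le
    rintro Q ⟨hsn, hqs⟩
    by_cases hQN : Q ≤ Subgroup.normalClosure (T : Set H)
    · exact hQN.trans hNK
    · have hbot := aux_component_centralizes Q _ hsn hqs Subgroup.normalClosure_normal hQN
      intro q hq
      apply aux_mem_normalizer_of_commute
      intro s hs
      have hmem := Subgroup.commutator_le.mp (le_of_eq hbot) q hq s
        (Subgroup.subset_normalClosure hs)
      rwa [Subgroup.mem_bot, commutatorElement_eq_one_iff_mul_comm] at hmem
  have hFit : ¬ fittingSubgroup H ≤ Subgroup.normalizer (T : Set H) := by
    intro hle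
    apply hTn
    rw [← Subgroup.normalizer_eq_top_iff]
    have hgf : generalizedFitting H ≤ Subgroup.normalizer (T : Set H) := sup_le hle hQK
    have hsup : generalizedFitting H ⊔ Subgroup.normalClosure (T : Set H) ≤ Subgroup.normalizer (T : Set H) :=
      sup_le hgf hNK
    rw [hfact] at hsup
    exact top_unique hsup
  have hex : ∃ M ∈ {K : Subgroup H | K.Normal ∧ Group.IsNilpotent ↥K}, ¬ M ≤ Subgroup.normalizer (T : Set H) := by
    by_contra hcon
    push_neg at hcon
    exact hFit (sSup_le hcon)
  obtain ⟨M, ⟨hMnorm, hMnil⟩, hMK⟩ := hex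
  obtain ⟨g0, hg0M, hg0K⟩ := SetLike.not_le_iff_exists.mp hMK
  obtain ⟨p, g, hp, hgz, hgK, hk⟩ :=
    aux_exists_primePow_not_mem (Subgroup.normalizer (T : Set H)) (orderOf g0) g0 rfl hg0K
  have hgM : g ∈ M := Subgroup.zpowers_le.mpr hg0M hgz
  obtain ⟨P, hPnorm, hgP, hPp⟩ := aux_normal_psubgroup M hMnorm hMnil hp g hgM hk
  refine ⟨p, hp, ?_⟩
  obtain ⟨i, hi⟩ := hall g
  have hgT : conjSubgroup g T ≠ T := fun e => hgK (aux_mem_normalizer_of_conj e)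
  have hij : i ≠ j := by
    rintro rfl
    exact hgT (hi.trans hjT)
  have hdisj : Disjoint (conjSubgroup (x i) T) (conjSubgroup (x j) T) := by
    have h1 := hindep i
    exact h1.mono_right (le_iSup₂ (f := fun k (_ : k ≠ i) => conjSubgroup (x k) T) j hij.symm)
  rintro ⟨tval, ht⟩
  have hconj : g * tval * g⁻¹ ∈ conjSubgroup (x i) T := by
    rw [← hi]; exact aux_mem_conjSubgroup.mpr ⟨tval, ht, rfl⟩
  have hsP : tval⁻¹ * (g * tval * g⁻¹) ∈ P := by
    have h1 : tval⁻¹ * g * tval ∈ P := by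
      have h2 := hPnorm.conj_mem g hgP tval⁻¹
      simpa [mul_assoc] using h2
    have h3 : tval⁻¹ * (g * tval * g⁻¹) = (tval⁻¹ * g * tval) * g⁻¹ := by group
    rw [h3]
    exact P.mul_mem h1 (P.inv_mem hgP)
  obtain ⟨k, hsk⟩ := hPp _ hsP
  refine ⟨k, ?_⟩
  have hcm : Commute tval⁻¹ (g * tval * g⁻¹) :=
    (hcomm i j hij _ hconj _ (by rw [hjT]; exact T.inv_mem ht)).symm
  have hs2 : tval⁻¹ ^ p ^ k * (g * tval * g⁻¹) ^ p ^ k = 1 := by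
    rw [← Commute.mul_pow hcm]; exact hsk
  rw [inv_pow, aux_conj_pow] at hs2
  have heq : tval ^ p ^ k = g * tval ^ p ^ k * g⁻¹ := inv_mul_eq_one.mp hs2
  have hm1 : tval ^ p ^ k ∈ conjSubgroup (x j) T := by
    rw [hjT]; exact T.pow_mem ht _
  have hm2 : tval ^ p ^ k ∈ conjSubgroup (x i) T := by
    rw [heq, ← hi]
    exact aux_mem_conjSubgroup.mpr ⟨tval ^ p ^ k, T.pow_mem ht _, rfl⟩
  have hone : tval ^ p ^ k = 1 := Subgroup.disjoint_def.mp hdisj hm2 hm1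
  apply Subtype.ext
  rw [SubmonoidClass.coe_pow]
  exact hone
end

section
/- Let G = AB be a finite group factorized by subgroups A and B of coprime orders, and let N be a normal subgroup of G. Then N = (N ∩ A)(N ∩ B). -/
open Subgroup

open scoped Pointwise


private lemma card_inf_mul_relIndex' {G : Type*} [Group G] (H K : Subgroup G) :
    Nat.card (H ⊓ K : Subgroup G) * H.relIndex K = Nat.card K := by
  have h2 : Nat.card (H.subgroupOf K) = Nat.card (H ⊓ K : Subgroup G) := by
    rw [← inf_subgroupOf_right]
    exact Nat.card_congr (subgroupOfEquivOfLe inf_le_right).toEquiv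
  rw [Subgroup.relIndex, ← h2, Subgroup.card_mul_index]

private lemma relIndex_dvd_index_of_normal_right' {G : Type*} [Group G] [Finite G]
    (A N : Subgroup G) (hN : N.Normal) : A.relIndex N ∣ A.index := by
  letI := hN
  have h1 : Nat.card (A ⊓ N : Subgroup G) * A.relIndex N = Nat.card N :=
    card_inf_mul_relIndex' A N
  have h2 : Nat.card (A ⊓ N : Subgroup G) * N.relIndex A = Nat.card A := by
    rw [inf_comm]; exact card_inf_mul_relIndex' N A
  have h3 : Nat.card (A ⊓ (A ⊔ N) : Subgroup G) * A.relIndex (A ⊔ N)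
      = Nat.card (A ⊔ N : Subgroup G) := card_inf_mul_relIndex' A (A ⊔ N)
  have h4 : Nat.card (N ⊓ (A ⊔ N) : Subgroup G) * N.relIndex (A ⊔ N)
      = Nat.card (A ⊔ N : Subgroup G) := card_inf_mul_relIndex' N (A ⊔ N)
  rw [inf_eq_left.mpr le_sup_left] at h3
  rw [inf_eq_left.mpr le_sup_right, Subgroup.relIndex_sup_right] at h4
  have key : A.relIndex N = A.relIndex (A ⊔ N) := by
    have hpos : 0 < Nat.card (A ⊓ N : Subgroup G) * N.relIndex A := by
      rw [h2]; exact Nat.card_pos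
    refine Nat.eq_of_mul_eq_mul_left hpos ?_
    calc (Nat.card (A ⊓ N : Subgroup G) * N.relIndex A) * A.relIndex N
        = (Nat.card (A ⊓ N : Subgroup G) * A.relIndex N) * N.relIndex A := by ring
      _ = Nat.card N * N.relIndex A := by rw [h1]
      _ = Nat.card A * A.relIndex (A ⊔ N) := by
          rw [h3, ← h4, mul_comm]
      _ = (Nat.card (A ⊓ N : Subgroup G) * N.relIndex A) * A.relIndex (A ⊔ N) := by
          rw [h2]
  rw [key]
  exact Subgroup.relIndex_dvd_index_of_le le_sup_left

/-- **Lemma 2.4.** If `G = AB` is a finite group factorized by subgroups of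
coprime orders and `N` is a normal subgroup of `G`, then `N = (N ∩ A)(N ∩ B)`. -/
theorem normal_eq_inf_mul_inf_of_coprime_factorization
    {G : Type*} [Group G] [Finite G] (A B N : Subgroup G)
    (hfact : ∀ g : G, ∃ a ∈ A, ∃ b ∈ B, g = a * b)
    (hcop : Nat.Coprime (Nat.card A) (Nat.card B))
    (hN : N.Normal) :
    (N : Set G) = (↑(N ⊓ A) : Set G) * (↑(N ⊓ B) : Set G) := by

  classical
  have hmul : (↑A : Set G) * (↑B : Set G) = Set.univ := by
    ext g
    simp only [Set.mem_univ, iff_true, Set.mem_mul]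
    obtain ⟨a, ha, b, hb, rfl⟩ := hfact g
    exact ⟨a, ha, b, hb, rfl⟩
  have hdisj : Disjoint A B := disjoint_iff.mpr (Subgroup.inf_eq_bot_of_coprime hcop)
  have hAB : Subgroup.IsComplement' A B :=
    Subgroup.isComplement'_of_disjoint_and_mul_eq_univ hdisj hmul
  have hAidx : A.index = Nat.card B := hAB.symm.index_eq_card
  have hBidx : B.index = Nat.card A := hAB.index_eq_card
  set x := A.relIndex N with hx
  set y := B.relIndex N with hy
  have hxb : x ∣ Nat.card B := hAidx ▸ relIndex_dvd_index_of_normal_right' A N hN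
  have hya : y ∣ Nat.card A := hBidx ▸ relIndex_dvd_index_of_normal_right' B N hN
  have h1 : Nat.card (A ⊓ N : Subgroup G) * x = Nat.card N := card_inf_mul_relIndex' A N
  have h2 : Nat.card (B ⊓ N : Subgroup G) * y = Nat.card N := card_inf_mul_relIndex' B N
  have hiA : Nat.card (A ⊓ N : Subgroup G) ∣ Nat.card A :=
    Subgroup.card_dvd_of_le inf_le_left
  have hiB : Nat.card (B ⊓ N : Subgroup G) ∣ Nat.card B :=
    Subgroup.card_dvd_of_le inf_le_left
  have hcop1 : Nat.Coprime (Nat.card (B ⊓ N : Subgroup G)) (Nat.card (A ⊓ N : Subgroup G)) :=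
    (hcop.symm.coprime_dvd_left hiB).coprime_dvd_right hiA
  have hd1 : Nat.card (B ⊓ N : Subgroup G) ∣ x := by
    have hdvd : Nat.card (B ⊓ N : Subgroup G) ∣ Nat.card (A ⊓ N : Subgroup G) * x := by
      rw [h1]; exact ⟨y, h2.symm⟩
    rw [mul_comm] at hdvd
    exact hcop1.dvd_of_dvd_mul_right hdvd
  have hcopxy : Nat.Coprime x y :=
    (hcop.symm.coprime_dvd_left hxb).coprime_dvd_right hya
  have hd2 : x ∣ Nat.card (B ⊓ N : Subgroup G) := by
    have hdvd : x ∣ Nat.card (B ⊓ N : Subgroup G) * y := by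
      rw [h2, ← h1]; exact ⟨Nat.card (A ⊓ N : Subgroup G), mul_comm _ _⟩
    exact hcopxy.dvd_of_dvd_mul_right hdvd
  have heq : x = Nat.card (B ⊓ N : Subgroup G) := Nat.dvd_antisymm hd2 hd1
  have hcardN : Nat.card (A ⊓ N : Subgroup G) * Nat.card (B ⊓ N : Subgroup G)
      = Nat.card N := by rw [← heq, h1]
  -- complements inside N
  have hcards : ∀ H : Subgroup G, H ≤ N →
      Nat.card (H.subgroupOf N) = Nat.card H := fun H hH =>
    Nat.card_congr (subgroupOfEquivOfLe hH).toEquiv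
  have hprod : Nat.card ((A ⊓ N).subgroupOf N) * Nat.card ((B ⊓ N).subgroupOf N)
      = Nat.card N := by
    rw [hcards _ inf_le_right, hcards _ inf_le_right, hcardN]
  have hcop2 : Nat.Coprime (Nat.card ((A ⊓ N).subgroupOf N))
      (Nat.card ((B ⊓ N).subgroupOf N)) := by
    rw [hcards _ inf_le_right, hcards _ inf_le_right]
    exact (hcop.coprime_dvd_left hiA).coprime_dvd_right hiB
  have hc : Subgroup.IsComplement' ((A ⊓ N).subgroupOf N) ((B ⊓ N).subgroupOf N) :=
    Subgroup.isComplement'_of_coprime hprod hcop2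
  ext g
  simp only [SetLike.mem_coe, Set.mem_mul]
  constructor
  · intro hg
    obtain ⟨⟨h, k⟩, hhk⟩ := hc.2 (⟨g, hg⟩ : N)
    have hh : ((h : N) : G) ∈ A ⊓ N := h.2
    have hk : ((k : N) : G) ∈ B ⊓ N := k.2
    refine ⟨((h : N) : G), ?_, ((k : N) : G), ?_, ?_⟩
    · exact Subgroup.mem_inf.mpr ⟨(Subgroup.mem_inf.mp hh).2, (Subgroup.mem_inf.mp hh).1⟩
    · exact Subgroup.mem_inf.mpr ⟨(Subgroup.mem_inf.mp hk).2, (Subgroup.mem_inf.mp hk).1⟩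
    · exact congrArg Subtype.val hhk
  · rintro ⟨a, ha, b, hb, rfl⟩
    exact N.mul_mem (Subgroup.mem_inf.mp ha).1 (Subgroup.mem_inf.mp hb).1
end

section
/- Let G = AB be a finite group factorized by subgroups A and B of coprime orders, and suppose the soluble radical of G is trivial, so that F*(G) = S_1 × ... × S_m is a direct product of nonabelian simple subgroups S_i which G permutes by conjugation; write S_iA = S_i ∩ A and S_iB = S_i ∩ B. If S_iA is not a p-group for any prime p, then S_i is normalized by F*(A); similarly, if S_iB is not a p-group for any prime p, then S_i is normalized by F*(B). -/
open Subgroup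
open scoped commutatorElement

namespace L33

variable {G : Type*} [Group G]

lemma mem_conj {g : G} {S : Subgroup G} {x : G} :
    x ∈ conjSubgroup g S ↔ ∃ s ∈ S, g * s * g⁻¹ = x := by
  simp [conjSubgroup, Subgroup.mem_map, MulAut.conj]

lemma conj_mem {g : G} {S : Subgroup G} {s : G} (hs : s ∈ S) :
    g * s * g⁻¹ ∈ conjSubgroup g S := mem_conj.2 ⟨s, hs, rfl⟩

lemma conj_conj (g h : G) (S : Subgroup G) :
    conjSubgroup g (conjSubgroup h S) = conjSubgroup (g * h) S := by
  ext x
  simp only [mem_conj]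
  constructor
  · rintro ⟨s, ⟨t, ht, rfl⟩, rfl⟩
    exact ⟨t, ht, by group⟩
  · rintro ⟨t, ht, rfl⟩
    exact ⟨h * t * h⁻¹, ⟨t, ht, rfl⟩, by group⟩

lemma conj_one (S : Subgroup G) : conjSubgroup 1 S = S := by
  ext x; simp [mem_conj]

lemma conj_le {g : G} {S T : Subgroup G} (h : ∀ s ∈ S, g * s * g⁻¹ ∈ T) :
    conjSubgroup g S ≤ T := by
  rintro x hx
  rcases mem_conj.1 hx with ⟨s, hs, rfl⟩
  exact h s hs

lemma conj_eq_of_relNormal {n : G} {M H : Subgroup G} (hn : n ∈ H) (hMH : M ≤ H)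
    (hc : ∀ x ∈ H, ∀ m ∈ M, x * m * x⁻¹ ∈ M) : conjSubgroup n M = M := by
  refine le_antisymm (conj_le fun m hm => hc n hn m hm) ?_
  intro m hm
  have h2 : n⁻¹ * m * n⁻¹⁻¹ ∈ M := hc n⁻¹ (inv_mem hn) m hm
  have : n * (n⁻¹ * m * n⁻¹⁻¹) * n⁻¹ = m := by group
  exact this ▸ conj_mem h2

lemma conj_self_eq {x : G} {H : Subgroup G} (hx : x ∈ H) : conjSubgroup x H = H :=
  conj_eq_of_relNormal hx le_rfl (fun y hy m hm => mul_mem (mul_mem hy hm) (inv_mem hy))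

lemma conj_eq_of_centralizes {w : G} {Q : Subgroup G} (h : ∀ u ∈ Q, w * u = u * w) :
    conjSubgroup w Q = Q := by
  refine le_antisymm (conj_le fun u hu => ?_) (fun u hu => ?_)
  · have he : w * u * w⁻¹ = u := by rw [h u hu]; group
    rw [he]; exact hu
  · exact mem_conj.2 ⟨u, hu, by rw [h u hu]; group⟩

lemma mem_normalizer_of_conj_eq {x : G} {T : Subgroup G} (h : conjSubgroup x T = T) :
    x ∈ Subgroup.normalizer (T : Set G) := by
  rw [Subgroup.mem_normalizer_iff]
  intro t
  constructor
  · intro ht; exact h ▸ conj_mem ht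
  · intro ht
    rcases mem_conj.1 (h.symm ▸ ht) with ⟨s, hs, hxs⟩
    have hst : s = t := by
      have h1 : x * s = x * t := by
        have := congrArg (fun y => y * x) hxs
        simpa [mul_assoc] using this
      exact mul_left_cancel h1
    exact hst ▸ hs

/-- Subnormal chains of a given length inside an ambient group. -/
def Chain (Q H : Subgroup G) (d : ℕ) : Prop :=
  ∃ c : Fin (d + 1) → Subgroup G, c 0 = Q ∧ c (Fin.last d) = H ∧
    ∀ i : Fin d, c i.castSucc ≤ c i.succ ∧
      ∀ x ∈ c i.succ, ∀ h ∈ c i.castSucc, x * h * x⁻¹ ∈ c i.castSucc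

lemma Chain.le {Q H : Subgroup G} {d : ℕ} (h : Chain Q H d) : Q ≤ H := by
  obtain ⟨c, h0, hl, hs⟩ := h
  have key : ∀ j : Fin (d + 1), c 0 ≤ c j := by
    intro j
    induction j using Fin.induction with
    | zero => exact le_rfl
    | succ i ih => exact ih.trans (hs i).1
  exact h0 ▸ hl ▸ key (Fin.last d)

lemma Chain.zero_eq {Q H : Subgroup G} (h : Chain Q H 0) : Q = H := by
  obtain ⟨c, h0, hl, _⟩ := h
  rw [← h0, ← hl]; rfl

lemma Chain.map {G' : Type*} [Group G'] (f : G →* G') {Q H : Subgroup G} {d : ℕ}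
    (h : Chain Q H d) : Chain (Q.map f) (H.map f) d := by
  obtain ⟨c, h0, hl, hs⟩ := h
  refine ⟨fun i => (c i).map f, by simp only [h0], by simp only [hl],
    fun i => ⟨Subgroup.map_mono (hs i).1, ?_⟩⟩
  rintro x hx h hh
  rcases Subgroup.mem_map.1 hx with ⟨x', hx', rfl⟩
  rcases Subgroup.mem_map.1 hh with ⟨h', hh', rfl⟩
  have : f x' * f h' * (f x')⁻¹ = f (x' * h' * x'⁻¹) := by
    simp [map_mul, map_inv]
  exact this ▸ Subgroup.mem_map.2 ⟨x' * h' * x'⁻¹, (hs i).2 x' hx' h' hh', rfl⟩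

lemma Chain.conj {Q H : Subgroup G} {d : ℕ} (n : G) (h : Chain Q H d) :
    Chain (conjSubgroup n Q) (conjSubgroup n H) d :=
  h.map (MulAut.conj n).toMonoidHom

lemma Chain.inf {Q H K : Subgroup G} {d : ℕ} (h : Chain Q H d) (hQK : Q ≤ K) (hKH : K ≤ H) :
    Chain Q K d := by
  obtain ⟨c, h0, hl, hs⟩ := h
  refine ⟨fun i => c i ⊓ K, by simp only [h0, inf_eq_left.2 hQK],
    by simp only [hl, inf_eq_right.2 hKH],
    fun i => ⟨inf_le_inf_right K (hs i).1, ?_⟩⟩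
  intro x hx h hh
  rcases Subgroup.mem_inf.1 hx with ⟨hx1, hx2⟩
  rcases Subgroup.mem_inf.1 hh with ⟨hh1, hh2⟩
  exact Subgroup.mem_inf.2 ⟨(hs i).2 x hx1 h hh1, mul_mem (mul_mem hx2 hh2) (inv_mem hx2)⟩

lemma Chain.trunc {Q H : Subgroup G} {d : ℕ} (h : Chain Q H (d + 1)) :
    ∃ M : Subgroup G, Chain Q M d ∧ M ≤ H ∧ ∀ x ∈ H, ∀ m ∈ M, x * m * x⁻¹ ∈ M := by
  obtain ⟨c, h0, hl, hs⟩ := h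
  refine ⟨c (Fin.last d).castSucc, ⟨fun i => c i.castSucc, by rw [← h0]; rfl, rfl, fun i => ?_⟩,
    ?_, ?_⟩
  · have := hs i.castSucc
    rwa [Fin.succ_castSucc] at this
  · have := (hs (Fin.last d)).1
    rwa [Fin.succ_last, hl] at this
  · have := (hs (Fin.last d)).2
    rwa [Fin.succ_last, hl] at this

end L33

namespace L33

variable {G : Type*} [Group G]

lemma perfect_of_surjective {X Y : Type*} [Group X] [Group Y] (f : X →* Y)
    (hf : Function.Surjective f) (h : _root_.commutator X = ⊤) : _root_.commutator Y = ⊤ := by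
  have h1 : Subgroup.map f ⁅(⊤ : Subgroup X), (⊤ : Subgroup X)⁆ =
      ⁅Subgroup.map f ⊤, Subgroup.map f ⊤⁆ := Subgroup.map_commutator ⊤ ⊤ f
  calc _root_.commutator Y = ⁅(⊤ : Subgroup Y), (⊤ : Subgroup Y)⁆ := _root_.commutator_def Y
    _ = ⁅Subgroup.map f ⊤, Subgroup.map f ⊤⁆ := by
        rw [Subgroup.map_top_of_surjective f hf]
    _ = Subgroup.map f ⁅(⊤ : Subgroup X), (⊤ : Subgroup X)⁆ := h1.symm
    _ = Subgroup.map f (_root_.commutator X) := by rw [← _root_.commutator_def X]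
    _ = ⊤ := by rw [h]; exact Subgroup.map_top_of_surjective f hf

/-- Transport quasisimplicity along a `MulEquiv`. -/
lemma quasisimple_congr {X Y : Type*} [Group X] [Group Y] (e : X ≃* Y)
    (h : IsQuasisimple X) : IsQuasisimple Y := by
  obtain ⟨hperf, hsimp, a, b, hab⟩ := h
  have hsurj : Function.Surjective e.toMonoidHom := e.surjective
  have hcenter : (Subgroup.center X).map e.toMonoidHom = Subgroup.center Y := by
    apply le_antisymm
    · rintro y ⟨x, hx, rfl⟩
      rw [Subgroup.mem_center_iff]
      intro g
      obtain ⟨g', rfl⟩ := hsurj g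
      have h2 := Subgroup.mem_center_iff.1 hx g'
      have h3 := congrArg e h2
      simpa [map_mul] using h3
    · intro y hy
      obtain ⟨x, rfl⟩ := hsurj y
      refine Subgroup.mem_map.2 ⟨x, Subgroup.mem_center_iff.2 fun g => ?_, rfl⟩
      have h2 := Subgroup.mem_center_iff.1 hy (e g)
      have h3 := congrArg e.symm h2
      simpa [map_mul] using h3
  have equot : X ⧸ Subgroup.center X ≃* Y ⧸ Subgroup.center Y :=
    QuotientGroup.congr _ _ e hcenter
  refine ⟨?_, ?_, equot a, equot b, ?_⟩
  · exact perfect_of_surjective e.toMonoidHom hsurj hperf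
  · haveI := hsimp
    haveI : Nontrivial (Y ⧸ Subgroup.center Y) := equot.symm.toEquiv.nontrivial
    exact IsSimpleGroup.isSimpleGroup_of_surjective equot.toMonoidHom equot.surjective
  · intro h
    apply hab
    have h2 : equot (a * b) = equot (b * a) := by
      rw [map_mul, map_mul, h]
    exact equot.injective h2

lemma quasisimple_map {G' : Type*} [Group G'] (f : G →* G') (hf : Function.Injective f)
    {Q : Subgroup G} (h : IsQuasisimple Q) : IsQuasisimple (Q.map f) :=
  quasisimple_congr (Q.equivMapOfInjective f hf) h

lemma IsQuasisimple.exists_noncomm {Q : Subgroup G} (h : IsQuasisimple Q) :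
    ∃ x ∈ Q, ∃ y ∈ Q, x * y ≠ y * x := by
  obtain ⟨_, _, a, b, hab⟩ := h
  obtain ⟨x, rfl⟩ := QuotientGroup.mk_surjective a
  obtain ⟨y, rfl⟩ := QuotientGroup.mk_surjective b
  refine ⟨x, x.2, y, y.2, fun hc => hab ?_⟩
  have : (x : Q) * y = y * x := Subtype.ext hc
  rw [← QuotientGroup.mk_mul, ← QuotientGroup.mk_mul, this]

/-- A proper "relatively normal" subgroup of a quasisimple subgroup is central in it. -/
lemma factZ {Q K : Subgroup G} (hq : IsQuasisimple Q) (hKQ : K ≤ Q)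
    (hconj : ∀ q ∈ Q, ∀ k ∈ K, q * k * q⁻¹ ∈ K) (hne : ¬Q ≤ K) :
    ∀ k ∈ K, ∀ q ∈ Q, k * q = q * k := by
  set K' : Subgroup Q := K.subgroupOf Q with hK'
  haveI hK'norm : K'.Normal := by
    constructor
    intro n hn g
    rw [Subgroup.mem_subgroupOf] at hn ⊢
    exact hconj g g.2 n hn
  obtain ⟨hperf, hsimp, _, _, _⟩ := hq
  haveI := hsimp
  set Z := Subgroup.center Q with hZ
  set φ := QuotientGroup.mk' Z with hφ
  have hφsurj : Function.Surjective φ := QuotientGroup.mk_surjective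
  haveI : (K'.map φ).Normal := hK'norm.map φ hφsurj
  rcases Subgroup.Normal.eq_bot_or_eq_top ‹(K'.map φ).Normal› with hbot | htop
  · -- K' central
    have hKZ : K' ≤ Z := by
      have := (Subgroup.map_eq_bot_iff _).1 hbot
      rwa [QuotientGroup.ker_mk'] at this
    intro k hk q hqQ
    have hkQ : k ∈ Q := hKQ hk
    have : (⟨k, hkQ⟩ : Q) ∈ Z := hKZ (by rwa [Subgroup.mem_subgroupOf])
    have h4 := Subgroup.mem_center_iff.1 this ⟨q, hqQ⟩
    exact (congrArg Subtype.val h4).symm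
  · exfalso
    have hsup : K' ⊔ Z = ⊤ := by
      have h1 : Subgroup.comap φ (K'.map φ) = K' ⊔ φ.ker := Subgroup.comap_map_eq φ K'
      rw [htop, QuotientGroup.ker_mk'] at h1
      simpa [Subgroup.comap_top] using h1.symm
    set ψ := QuotientGroup.mk' K' with hψ
    have hψsurj : Function.Surjective ψ := QuotientGroup.mk_surjective
    have hmapK' : K'.map ψ = ⊥ := (Subgroup.map_eq_bot_iff _).2 (by rw [QuotientGroup.ker_mk'])
    have hmapZ : Subgroup.map ψ Z = ⊤ := by
      have := congrArg (Subgroup.map ψ) hsup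
      rwa [Subgroup.map_sup, hmapK', bot_sup_eq, Subgroup.map_top_of_surjective _ hψsurj] at this
    -- the quotient is abelian
    have habel : ∀ u v : Q ⧸ K', u * v = v * u := by
      intro u v
      obtain ⟨z, hz, rfl⟩ : ∃ z ∈ Z, ψ z = u := by
        have : u ∈ Subgroup.map ψ Z := hmapZ ▸ Subgroup.mem_top u
        rcases this with ⟨z, hz, rfl⟩; exact ⟨z, hz, rfl⟩
      obtain ⟨w, rfl⟩ := hψsurj v
      rw [← map_mul, ← map_mul, Subgroup.mem_center_iff.1 hz w]
    -- but it is also perfect and nontrivial: contradiction via K' = ⊤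
    have hcomm_top : _root_.commutator (Q ⧸ K') = ⊤ :=
      perfect_of_surjective ψ hψsurj hperf
    have hcomm_bot : _root_.commutator (Q ⧸ K') ≤ ⊥ := by
      rw [_root_.commutator_def, Subgroup.commutator_le]
      intro g _ h _
      have : ⁅g, h⁆ = 1 := commutatorElement_eq_one_iff_mul_comm.2 (habel g h)
      simp [this]
    have hK'top : K' = ⊤ := by
      rw [eq_top_iff]
      intro q _
      have : ψ q ∈ (⊥ : Subgroup (Q ⧸ K')) := hcomm_bot (hcomm_top ▸ Subgroup.mem_top (ψ q))
      have : ψ q = 1 := Subgroup.mem_bot.1 this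
      rwa [← QuotientGroup.ker_mk' K', MonoidHom.mem_ker]
    apply hne
    intro q hqQ
    have : (⟨q, hqQ⟩ : Q) ∈ K' := hK'top ▸ Subgroup.mem_top _
    rwa [Subgroup.mem_subgroupOf] at this

end L33
namespace L33

variable {G : Type*} [Group G]

/-- If an element of `N ⊴ H` normalizes a quasisimple `Q ≤ H` with `Q ⊄ N`,
it centralizes it. -/
lemma claim1 {H Q N : Subgroup G} (hQH : Q ≤ H) (hq : IsQuasisimple Q)
    (hNc : ∀ x ∈ H, ∀ m ∈ N, x * m * x⁻¹ ∈ N) (hQN : ¬Q ≤ N)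
    {n : G} (hn : n ∈ N) (hfix : conjSubgroup n Q = Q) : ∀ q ∈ Q, q * n = n * q := by
  set K := Q ⊓ N with hK
  have hKconj : ∀ q ∈ Q, ∀ k ∈ K, q * k * q⁻¹ ∈ K := by
    intro q hqQ k hk
    have hk1 : k ∈ Q := hk.1
    have hk2 : k ∈ N := hk.2
    have m1 : q * k * q⁻¹ ∈ Q := mul_mem (mul_mem hqQ hk1) (inv_mem hqQ)
    have m2 : q * k * q⁻¹ ∈ N := hNc q (hQH hqQ) k hk2
    exact Subgroup.mem_inf.2 ⟨m1, m2⟩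
  have hQK : ¬Q ≤ K := fun h => hQN (h.trans inf_le_right)
  have hcent := factZ hq inf_le_left hKconj hQK
  set Z : G → G := fun q => q⁻¹ * (n⁻¹ * q * n) with hZ
  have hfix' : conjSubgroup n⁻¹ Q = Q := by
    conv_lhs => rw [← hfix]
    rw [conj_conj, inv_mul_cancel, conj_one]
  have hZmem : ∀ q ∈ Q, Z q ∈ K := by
    intro q hqQ
    have m1 : Z q ∈ Q := by
      have h1 : n⁻¹ * q * n⁻¹⁻¹ ∈ conjSubgroup n⁻¹ Q := conj_mem hqQ
      rw [hfix', inv_inv] at h1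
      exact mul_mem (inv_mem hqQ) h1
    have m2 : Z q ∈ N := by
      have h1 : q⁻¹ * n⁻¹ * q⁻¹⁻¹ ∈ N := hNc q⁻¹ (inv_mem (hQH hqQ)) n⁻¹ (inv_mem hn)
      rw [inv_inv] at h1
      have h2 : Z q = q⁻¹ * n⁻¹ * q * n := by simp [hZ, mul_assoc]
      rw [h2]
      exact mul_mem h1 hn
    exact Subgroup.mem_inf.2 ⟨m1, m2⟩
  have hZmul : ∀ a ∈ Q, ∀ b ∈ Q, Z (a * b) = Z a * Z b := by
    intro a ha b hb
    have hc : Z a * b = b * Z a := hcent (Z a) (hZmem a ha) b hb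
    calc Z (a * b) = b⁻¹ * (Z a * b) * Z b := by simp only [hZ]; group
      _ = b⁻¹ * (b * Z a) * Z b := by rw [hc]
      _ = Z a * Z b := by group
  have hZone : Z 1 = 1 := by simp [hZ]
  have hZinv : ∀ a ∈ Q, Z a⁻¹ = (Z a)⁻¹ := by
    intro a ha
    have h1 := hZmul a ha a⁻¹ (inv_mem ha)
    rw [mul_inv_cancel, hZone] at h1
    exact eq_inv_of_mul_eq_one_right h1.symm
  have hcommZ : ∀ a ∈ Q, ∀ b ∈ Q, Z (a * b * a⁻¹ * b⁻¹) = 1 := by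
    intro a ha b hb
    have h1 : Z (a * b * a⁻¹ * b⁻¹) = Z a * Z b * (Z a)⁻¹ * (Z b)⁻¹ := by
      rw [hZmul (a * b * a⁻¹) (mul_mem (mul_mem ha hb) (inv_mem ha)) b⁻¹ (inv_mem hb),
        hZmul (a * b) (mul_mem ha hb) a⁻¹ (inv_mem ha),
        hZmul a ha b hb, hZinv a ha, hZinv b hb]
    have hZaQ : Z a ∈ Q := (inf_le_left : K ≤ Q) (hZmem a ha)
    have hcm : Z b * (Z a)⁻¹ = (Z a)⁻¹ * Z b :=
      hcent (Z b) (hZmem b hb) (Z a)⁻¹ (inv_mem hZaQ)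
    calc Z (a * b * a⁻¹ * b⁻¹) = Z a * (Z b * (Z a)⁻¹) * (Z b)⁻¹ := by rw [h1]; group
      _ = Z a * ((Z a)⁻¹ * Z b) * (Z b)⁻¹ := by rw [hcm]
      _ = 1 := by group
  have hQT : ∀ g1 g2 : Q, ((⁅g1, g2⁆ : Q) : G) ∈ Subgroup.centralizer {n} := by
    intro g1 g2
    set c : G := (g1 : G) * g2 * (g1 : G)⁻¹ * (g2 : G)⁻¹ with hcdef
    have hZ1 : Z c = 1 :=
      hcommZ (g1 : G) g1.2 (g2 : G) g2.2
    simp only [hZ] at hZ1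
    have h3 : n⁻¹ * c * n = c := by
      have h4 : c * (c⁻¹ * (n⁻¹ * c * n)) = c * 1 := by rw [hZ1]
      calc n⁻¹ * c * n = c * (c⁻¹ * (n⁻¹ * c * n)) := by group
        _ = c * 1 := h4
        _ = c := mul_one _
    rw [Subgroup.mem_centralizer_iff]
    intro m hm
    rw [Set.mem_singleton_iff] at hm
    rw [hm]
    show n * c = c * n
    conv_lhs => rw [← h3]
    group
  intro q hqQ
  have hmem : (⟨q, hqQ⟩ : Q) ∈ Subgroup.comap Q.subtype (Subgroup.centralizer {n}) := by
    have htop : (⟨q, hqQ⟩ : Q) ∈ (⊤ : Subgroup Q) := Subgroup.mem_top _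
    rw [← hq.1, _root_.commutator_def] at htop
    revert htop
    refine fun htop => (Subgroup.commutator_le.2 ?_) htop
    intro g1 _ g2 _
    rw [Subgroup.mem_comap]
    exact hQT g1 g2
  rw [Subgroup.mem_comap] at hmem
  have h5 := Subgroup.mem_centralizer_iff.1 hmem n (Set.mem_singleton n)
  exact h5.symm

end L33
namespace L33

variable (G : Type*) [Group G]

/-- A quasisimple subgroup that is subnormal (with defect `d`) in `H` centralizes
every relatively-normal subgroup of `H` not containing it. -/
def AStat (d : ℕ) : Prop :=
  ∀ H Q N : Subgroup G, Chain Q H d → IsQuasisimple Q → N ≤ H →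
    (∀ x ∈ H, ∀ m ∈ N, x * m * x⁻¹ ∈ N) → ¬Q ≤ N →
    ∀ q ∈ Q, ∀ x ∈ N, q * x = x * q

/-- Two distinct quasisimple subgroups, subnormal in `M` with defects `d1, d2`, commute. -/
def BStat (d1 d2 : ℕ) : Prop :=
  ∀ M Q1 Q2 : Subgroup G, Chain Q1 M d1 → Chain Q2 M d2 →
    IsQuasisimple Q1 → IsQuasisimple Q2 → Q1 ≠ Q2 →
    ∀ x ∈ Q1, ∀ y ∈ Q2, x * y = y * x

variable {G}

theorem master : ∀ n : ℕ, (∀ d, 2 * d ≤ n → AStat G d) ∧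
    (∀ d1 d2, d1 + d2 + 1 ≤ n → BStat G d1 d2) := by
  intro n
  induction n using Nat.strong_induction_on with
  | _ n IH =>
  constructor
  · -- AStat
    intro d hd H Q N hchain hq hNH hNc hQN
    have hQH : Q ≤ H := hchain.le
    -- key dichotomy for elements of N
    have key : ∀ m ∈ N, conjSubgroup m Q = Q := by
      intro m hm
      by_contra hne
      -- d = 0 is impossible
      match d, hd, hchain with
      | 0, hd, hchain =>
        exact hne (conj_self_eq (hchain.zero_eq ▸ hNH hm))
      | (e+1), hd, hchain =>
        obtain ⟨M, hcM, hMH, hMc⟩ := hchain.trunc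
        have hmH : m ∈ H := hNH hm
        -- the conjugate of Q by m, also subnormal in M with defect e
        set Qm := conjSubgroup m Q with hQm
        have hchainQm : Chain Qm M e := by
          have h1 := hcM.conj m
          rwa [conj_eq_of_relNormal hmH hMH hMc] at h1
        have hqm : IsQuasisimple Qm :=
          quasisimple_map (MulAut.conj m).toMonoidHom (MulAut.conj m).injective hq
        -- distinct components of M commute (smaller measure)
        have hB : BStat G e e := (IH (2 * e + 1) (by omega)).2 e e (by omega)
        have hcomm : ∀ x ∈ Q, ∀ y ∈ Qm, x * y = y * x :=
          hB M Q Qm hcM hchainQm hq hqm (fun h => hne h.symm)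
        -- now every q ∈ Q is central in Q : contradiction
        have habel : ∀ q ∈ Q, ∀ u ∈ Q, q⁻¹ * u * q = u := by
          intro q hqQ u huQ
          set w : G := m * q * m⁻¹ with hw
          have hwQm : w ∈ Qm := conj_mem hqQ
          set z : G := w * q⁻¹ with hz
          have hzN : z ∈ N := by
            have h1 : q * m⁻¹ * q⁻¹ ∈ N := by
              have := hNc q (hQH hqQ) m⁻¹ (inv_mem hm)
              simpa using this
            have h2 : z = m * (q * m⁻¹ * q⁻¹) := by rw [hz, hw]; group
            rw [h2]
            exact mul_mem hm h1
          have hzfix : conjSubgroup z Q = Q := by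
            have h1 : ∀ u' ∈ Q, z * u' * z⁻¹ = q⁻¹ * u' * q := by
              intro u' hu'
              have hc : w * (q⁻¹ * u' * q) = (q⁻¹ * u' * q) * w :=
                (hcomm (q⁻¹ * u' * q) (mul_mem (mul_mem (inv_mem hqQ) hu') hqQ) w hwQm).symm
              calc z * u' * z⁻¹ = w * (q⁻¹ * u' * q) * w⁻¹ := by rw [hz]; group
                _ = (q⁻¹ * u' * q) * w * w⁻¹ := by rw [hc]
                _ = q⁻¹ * u' * q := by group
            apply le_antisymm
            · apply conj_le
              intro s hs
              rw [h1 s hs]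
              exact mul_mem (mul_mem (inv_mem hqQ) hs) hqQ
            · intro s hs
              have hs' : q * s * q⁻¹ ∈ Q := mul_mem (mul_mem hqQ hs) (inv_mem hqQ)
              have := h1 (q * s * q⁻¹) hs'
              have h2 : q⁻¹ * (q * s * q⁻¹) * q = s := by group
              rw [h2] at this
              exact mem_conj.2 ⟨q * s * q⁻¹, hs', this⟩
          have hzcent := claim1 hQH hq hNc hQN hzN hzfix
          -- z centralizes Q, but conj by z acts as conj by q⁻¹
          have h1 : ∀ u' ∈ Q, z * u' * z⁻¹ = q⁻¹ * u' * q := by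
            intro u' hu'
            have hc : w * (q⁻¹ * u' * q) = (q⁻¹ * u' * q) * w :=
              (hcomm (q⁻¹ * u' * q) (mul_mem (mul_mem (inv_mem hqQ) hu') hqQ) w hwQm).symm
            calc z * u' * z⁻¹ = w * (q⁻¹ * u' * q) * w⁻¹ := by rw [hz]; group
              _ = (q⁻¹ * u' * q) * w * w⁻¹ := by rw [hc]
              _ = q⁻¹ * u' * q := by group
          have h2 := h1 u huQ
          have h3 : u * z = z * u := hzcent u huQ
          rw [← h2]
          calc z * u * z⁻¹ = u * z * z⁻¹ := by rw [← h3]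
            _ = u := by group
        obtain ⟨x, hx, y, hy, hxy⟩ := L33.IsQuasisimple.exists_noncomm hq
        apply hxy
        have := habel x hx y hy
        calc x * y = x * (x⁻¹ * y * x) := by rw [this]
          _ = y * x := by group
    intro q hqQ x hx
    exact claim1 hQH hq hNc hQN hx (key x hx) q hqQ
  · -- BStat
    intro d1 d2 hm
    -- core, assuming d1 ≤ d2
    have core : ∀ d1 d2, d1 ≤ d2 → d1 + d2 + 1 ≤ n → BStat G d1 d2 := by
      intro d1 d2 hle hmn M Q1 Q2 hc1 hc2 hq1 hq2 hne
      match d2, hle, hmn, hc2 with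
      | 0, hle, hmn, hc2 =>
        interval_cases d1
        exact absurd (hc1.zero_eq.trans hc2.zero_eq.symm) hne
      | (e+1), hle, hmn, hc2 =>
        obtain ⟨M2, hcM2, hM2M, hM2c⟩ := hc2.trunc
        by_cases hQ1M2 : Q1 ≤ M2
        · -- both inside M2
          have hc1' : Chain Q1 M2 d1 := hc1.inf hQ1M2 hM2M
          exact (IH (d1 + e + 1) (by omega)).2 d1 e le_rfl M2 Q1 Q2 hc1' hcM2 hq1 hq2 hne
        · -- Q1 centralizes M2 ⊇ Q2
          have hA : AStat G d1 := (IH (d1 + d2) (by omega)).1 d1 (by omega)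
          intro x hx y hy
          exact hA M Q1 M2 hc1 hq1 hM2M hM2c hQ1M2 x hx y (hcM2.le hy)
    rcases le_total d1 d2 with h | h
    · exact core d1 d2 h hm
    · intro M Q1 Q2 hc1 hc2 hq1 hq2 hne x hx y hy
      exact (core d2 d1 h (by omega) M Q2 Q1 hc2 hc1 hq2 hq1 hne.symm y hy x hx).symm

/-- Lemma A: a subnormal quasisimple subgroup centralizes every relatively normal
subgroup not containing it. -/
theorem lemA {d : ℕ} {H Q N : Subgroup G} (hchain : Chain Q H d) (hq : IsQuasisimple Q)
    (hNH : N ≤ H) (hNc : ∀ x ∈ H, ∀ m ∈ N, x * m * x⁻¹ ∈ N) (hQN : ¬Q ≤ N) :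
    ∀ q ∈ Q, ∀ x ∈ N, q * x = x * q :=
  (master (2 * d)).1 d le_rfl H Q N hchain hq hNH hNc hQN

end L33
namespace L33

variable {G : Type*} [Group G]

/-- In a finite nilpotent group, the product of two `p`-elements is a `p`-element. -/
lemma pelem_mul {K : Type*} [Group K] [Finite K] (hK : Group.IsNilpotent K) {p : ℕ}
    (hp : p.Prime) {x y : K} (hx : ∃ k, x ^ p ^ k = 1) (hy : ∃ k, y ^ p ^ k = 1) :
    ∃ k, (x * y) ^ p ^ k = 1 := by
  haveI : Fact p.Prime := ⟨hp⟩
  obtain ⟨P⟩ : Nonempty (Sylow p K) := inferInstance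
  have hnorm : (P : Subgroup K).Normal := by
    have h4 := (isNilpotent_of_finite_tfae (G := K)).out 0 3
    exact h4.mp hK p ⟨hp⟩ P
  haveI := P.unique_of_normal hnorm
  have hmem : ∀ z : K, (∃ k, z ^ p ^ k = 1) → z ∈ (P : Subgroup K) := by
    intro z hz
    have hzP : IsPGroup p (Subgroup.zpowers z) := by
      intro g
      obtain ⟨k0, hk0⟩ := hz
      refine ⟨k0, ?_⟩
      obtain ⟨n, hn⟩ := g.2
      have h1 : (g : K) ^ p ^ k0 = 1 := by
        rw [← hn, ← zpow_natCast, ← zpow_mul, mul_comm, zpow_mul, zpow_natCast, hk0, one_zpow]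
      exact Subtype.ext (by rw [SubmonoidClass.coe_pow, OneMemClass.coe_one]; exact h1)
    obtain ⟨Q, hle⟩ := hzP.exists_le_sylow
    have hQP : Q = P := Subsingleton.elim Q P
    exact hQP ▸ hle (Subgroup.mem_zpowers z)
  have hxy : x * y ∈ (P : Subgroup K) := mul_mem (hmem x hx) (hmem y hy)
  obtain ⟨k, hk⟩ := P.isPGroup' ⟨x * y, hxy⟩
  refine ⟨k, ?_⟩
  have := congrArg (Subtype.val) hk
  rwa [SubmonoidClass.coe_pow, OneMemClass.coe_one] at this

/-- A subgroup containing all prime-power-order elements of `H'` contains `H'`. -/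
lemma decomp [Finite G] (H' NN : Subgroup G)
    (h : ∀ p : ℕ, p.Prime → ∀ x ∈ H', (∃ k, x ^ p ^ k = 1) → x ∈ NN) : H' ≤ NN := by
  have main : ∀ n : ℕ, ∀ x ∈ H', orderOf x = n → x ∈ NN := by
    intro n
    induction n using Nat.strong_induction_on with
    | _ n IHn =>
    intro x hxH hord
    have hpos : 0 < n := hord ▸ orderOf_pos x
    by_cases h1 : n = 1
    · have : x = 1 := orderOf_eq_one_iff.1 (by rw [hord, h1])
      rw [this]; exact one_mem NN
    set p := n.minFac with hpdef
    have hp : p.Prime := Nat.minFac_prime h1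
    set k := n.factorization p with hkdef
    have hpk_dvd : p ^ k ∣ n := Nat.ordProj_dvd n p
    set m := n / p ^ k with hmdef
    have hnm : p ^ k * m = n := Nat.mul_div_cancel' hpk_dvd
    have hk1 : 0 < k := hp.factorization_pos_of_dvd (by omega) (Nat.minFac_dvd n)
    have hpkgt : 1 < p ^ k := Nat.one_lt_pow (by omega) hp.one_lt
    have hmpos : 0 < m := by
      rcases Nat.eq_zero_or_pos m with h2 | h2
      · rw [h2, mul_zero] at hnm; omega
      · exact h2
    have hmlt : m < n := Nat.div_lt_self hpos hpkgt
    have hcop : Nat.Coprime m (p ^ k) := by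
      have h2 : ¬p ∣ m := Nat.not_dvd_ordCompl hp (by omega)
      exact Nat.Coprime.pow_right k ((hp.coprime_iff_not_dvd.2 h2).symm)
    obtain ⟨c, -, hc⟩ := Nat.exists_mul_mod_eq_one_of_coprime hcop hpkgt
    set y := x ^ (m * c) with hydef
    have hyH : y ∈ H' := pow_mem hxH _
    have hyNN : y ∈ NN := by
      refine h p hp y hyH ⟨k, ?_⟩
      rw [hydef, ← pow_mul]
      apply orderOf_dvd_iff_pow_eq_one.1
      rw [hord]
      exact ⟨c, by rw [← hnm]; ring⟩
    have ht : m * c = p ^ k * (m * c / p ^ k) + 1 := by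
      have h3 := Nat.div_add_mod (m * c) (p ^ k)
      omega
    set t := m * c / p ^ k with htdef
    set z := (x ^ p ^ k) ^ t with hzdef
    have hyzx : y = z * x := by
      rw [hydef, hzdef, ht, pow_add, pow_one, pow_mul]
    have hzH : z ∈ H' := pow_mem (pow_mem hxH _) _
    have hzNN : z ∈ NN := by
      have hzm : z ^ m = 1 := by
        rw [hzdef, ← pow_mul, ← pow_mul]
        apply orderOf_dvd_iff_pow_eq_one.1
        rw [hord]
        exact ⟨t, by rw [← hnm]; ring⟩
      have hordz : orderOf z ∣ m := orderOf_dvd_iff_pow_eq_one.2 hzm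
      exact IHn (orderOf z) (lt_of_le_of_lt (Nat.le_of_dvd hmpos hordz) hmlt) z hzH rfl
    have hx_eq : x = z⁻¹ * y := by rw [hyzx]; group
    rw [hx_eq]
    exact mul_mem (inv_mem hzNN) hyNN
  intro x hx
  exact main (orderOf x) x hx rfl

/-- From a subgroup that is not a `p`-group, extract an element of prime order `q ≠ p`. -/
lemma exists_prime_order [Finite G] {K : Subgroup G} {p : ℕ}
    (h : ¬IsPGroup p K) : ∃ q : ℕ, q.Prime ∧ q ≠ p ∧ ∃ a ∈ K, orderOf a = q := by
  rw [IsPGroup] at h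
  push_neg at h
  obtain ⟨g, hg⟩ := h
  have hne : ∀ k : ℕ, ((g : G)) ^ p ^ k ≠ 1 := by
    intro k hk
    exact hg k (Subtype.ext (by rw [SubmonoidClass.coe_pow, OneMemClass.coe_one]; exact hk))
  set n := orderOf (g : G) with hndef
  have hn0 : 0 < n := orderOf_pos _
  have hq : ∃ q, q.Prime ∧ q ∣ n ∧ q ≠ p := by
    by_contra hcon
    push_neg at hcon
    have hall : ∀ {q : ℕ}, q.Prime → q ∣ n → q = p := fun hq hd => hcon _ hq hd
    have h5 := Nat.eq_prime_pow_of_unique_prime_dvd (n := n) (by omega) hall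
    exact hne _ (by rw [← h5]; exact pow_orderOf_eq_one (g : G))
  obtain ⟨q, hqp, hqd, hqnep⟩ := hq
  refine ⟨q, hqp, hqnep, (g : G) ^ (n / q), pow_mem g.2 _, ?_⟩
  set a := (g : G) ^ (n / q) with hadef
  have haq : a ^ q = 1 := by
    rw [hadef, ← pow_mul, Nat.div_mul_cancel hqd]
    exact pow_orderOf_eq_one _
  have ha1 : a ≠ 1 := by
    intro h1
    have hdv : n ∣ n / q := orderOf_dvd_iff_pow_eq_one.2 (hadef.symm.trans h1)
    have hlt : n / q < n := Nat.div_lt_self hn0 hqp.one_lt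
    have hpos' : 0 < n / q := Nat.div_pos (Nat.le_of_dvd hn0 hqd) hqp.pos
    have := Nat.le_of_dvd hpos' hdv
    omega
  have hdvd : orderOf a ∣ q := orderOf_dvd_iff_pow_eq_one.2 haq
  rcases (Nat.Prime.eq_one_or_self_of_dvd hqp _ hdvd) with h2 | h2
  · exact absurd (orderOf_eq_one_iff.1 h2) ha1
  · exact h2

end L33
namespace L33

variable {G : Type*} [Group G]

lemma conj_pow_eq (g x : G) (n : ℕ) : (g * x * g⁻¹) ^ n = g * x ^ n * g⁻¹ := by
  have h := map_pow (MulAut.conj g).toMonoidHom x n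
  simpa [MulAut.conj] using h.symm

/-- The main lemma, for one side of the factorization. -/
lemma main_side [Finite G] {m : ℕ} (S : Fin m → Subgroup G) (A : Subgroup G)
    (hindep : iSupIndep S)
    (hcomm : ∀ i j, i ≠ j → ∀ x ∈ S i, ∀ y ∈ S j, x * y = y * x)
    (hperm : ∀ (g : G) (i : Fin m), ∃ j, conjSubgroup g (S i) = S j)
    (i : Fin m)
    (hA : ¬∃ p : ℕ, p.Prime ∧ IsPGroup p (S i ⊓ A : Subgroup G)) :
    Subgroup.map A.subtype (generalizedFitting A) ≤ Subgroup.normalizer (S i : Set G) := by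
  push_neg at hA
  have hdisj : ∀ j, j ≠ i → ∀ a, a ∈ S i → a ∈ S j → a = 1 := by
    intro j hj a hai haj
    have h1 : a ∈ (⨆ k, ⨆ (_ : k ≠ i), S k) :=
      Subgroup.mem_iSup_of_mem j (Subgroup.mem_iSup_of_mem hj haj)
    have h2 := (hindep i).le_bot (Subgroup.mem_inf.2 ⟨hai, h1⟩)
    exact Subgroup.mem_bot.1 h2
  rw [Subgroup.map_le_iff_le_comap]
  show fittingSubgroup ↥A ⊔ sSup {Q : Subgroup ↥A | Q.IsSubnormal' ∧ IsQuasisimple Q} ≤ _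
  apply sup_le
  · -- Fitting part
    apply sSup_le
    rintro Hn ⟨hnormal, hnilp⟩
    rw [← Subgroup.map_le_iff_le_comap]
    set H' := Subgroup.map A.subtype Hn with hH'def
    have hH'A : H' ≤ A := Subgroup.map_subtype_le Hn
    have hH'conj : ∀ g ∈ A, ∀ x ∈ H', g * x * g⁻¹ ∈ H' := by
      intro g hg x hx
      rcases Subgroup.mem_map.1 hx with ⟨x', hx', rfl⟩
      have h1 : (⟨g, hg⟩ : A) * x' * (⟨g, hg⟩ : A)⁻¹ ∈ Hn := hnormal.conj_mem x' hx' ⟨g, hg⟩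
      exact Subgroup.mem_map.2 ⟨_, h1, rfl⟩
    haveI hnilHn : Group.IsNilpotent ↥Hn := hnilp
    haveI hnil' : Group.IsNilpotent ↥H' :=
      nilpotent_of_mulEquiv (Hn.equivMapOfInjective A.subtype A.subtype_injective)
    apply decomp H' _
    intro p hp x hxH' hpow
    obtain ⟨j, hj⟩ := hperm x i
    by_cases hji : j = i
    · exact mem_normalizer_of_conj_eq (by rw [← hji] at hj ⊢; exact hj)
    · exfalso
      obtain ⟨q, hqprime, hqp, a, haK, horda⟩ := exists_prime_order (hA p hp)
      have hai : a ∈ S i := (Subgroup.mem_inf.1 haK).1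
      have haA : a ∈ A := (Subgroup.mem_inf.1 haK).2
      have hxA : x ∈ A := hH'A hxH'
      set a' := x * a * x⁻¹ with ha'def
      have ha'Sj : a' ∈ S j := by rw [← hj]; exact conj_mem hai
      have hcomm' : a * a' = a' * a := hcomm i j (fun h => hji h.symm) a hai a' ha'Sj
      set c := a⁻¹ * a' with hcdef
      have hu : a⁻¹ * x * a ∈ H' := by
        have h2 := hH'conj a⁻¹ (inv_mem haA) x hxH'
        rwa [inv_inv] at h2
      have hcH' : c ∈ H' := by
        have h2 : c = (a⁻¹ * x * a) * x⁻¹ := by rw [hcdef, ha'def]; group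
        rw [h2]; exact mul_mem hu (inv_mem hxH')
      obtain ⟨k0, hk0⟩ := hpow
      have hu_pow : (a⁻¹ * x * a) ^ p ^ k0 = 1 := by
        have h3 : (a⁻¹ * x * a) ^ p ^ k0 = a⁻¹ * x ^ p ^ k0 * a := by
          have h4 := conj_pow_eq a⁻¹ x (p ^ k0)
          rwa [inv_inv] at h4
        rw [h3, hk0, mul_one, inv_mul_cancel]
      have hv_pow : (x⁻¹) ^ p ^ k0 = 1 := by
        rw [inv_pow, hk0, inv_one]
      have hc_p : ∃ k, c ^ p ^ k = 1 := by
        have hres := pelem_mul hnil' hp (x := ⟨a⁻¹ * x * a, hu⟩) (y := ⟨x⁻¹, inv_mem hxH'⟩)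
          ⟨k0, Subtype.ext (by rw [SubmonoidClass.coe_pow, OneMemClass.coe_one]; exact hu_pow)⟩
          ⟨k0, Subtype.ext (by rw [SubmonoidClass.coe_pow, OneMemClass.coe_one]; exact hv_pow)⟩
        obtain ⟨k, hk⟩ := hres
        refine ⟨k, ?_⟩
        have h5 := congrArg Subtype.val hk
        rw [SubmonoidClass.coe_pow, OneMemClass.coe_one] at h5
        have h6 : ((⟨a⁻¹ * x * a, hu⟩ : H') * ⟨x⁻¹, inv_mem hxH'⟩ : H') = (⟨c, hcH'⟩ : H') := by
          apply Subtype.ext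
          show (a⁻¹ * x * a) * x⁻¹ = c
          rw [hcdef, ha'def]; group
        rw [h6] at h5
        exact h5
      have hcq : c ^ q = 1 := by
        have hcomm2 : Commute a⁻¹ a' := (Commute.inv_left hcomm')
        have h4 : c ^ q = (a⁻¹) ^ q * a' ^ q := hcomm2.mul_pow q
        have ha_q : a ^ q = 1 := by rw [← horda]; exact pow_orderOf_eq_one a
        have ha'_q : a' ^ q = 1 := by
          rw [ha'def, conj_pow_eq, ha_q, mul_one, mul_inv_cancel]
        rw [h4, inv_pow, ha_q, ha'_q, inv_one, one_mul]
      have hc1 : c = 1 := by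
        obtain ⟨k, hk⟩ := hc_p
        have h5 : orderOf c ∣ p ^ k := orderOf_dvd_iff_pow_eq_one.2 hk
        have h6 : orderOf c ∣ q := orderOf_dvd_iff_pow_eq_one.2 hcq
        have hcop : Nat.Coprime q (p ^ k) := ((Nat.coprime_primes hqprime hp).2 hqp).pow_right k
        have h7 : orderOf c ∣ Nat.gcd q (p ^ k) := Nat.dvd_gcd h6 h5
        rw [Nat.Coprime] at hcop
        rw [hcop] at h7
        exact orderOf_eq_one_iff.1 (Nat.dvd_one.1 h7)
      have haa' : a = a' := by
        have h8 := hc1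
        rw [hcdef] at h8
        exact inv_mul_eq_one.1 h8
      have ha1 : a = 1 := hdisj j hji a hai (haa' ▸ ha'Sj)
      rw [ha1, orderOf_one] at horda
      have := hqprime.one_lt
      omega
  · -- quasisimple part
    apply sSup_le
    rintro Qn ⟨hsub, hquasi⟩
    rw [← Subgroup.map_le_iff_le_comap]
    set Q' := Subgroup.map A.subtype Qn with hQ'def
    have hq' : IsQuasisimple Q' := quasisimple_map A.subtype A.subtype_injective hquasi
    obtain ⟨d, c, h0, hl, hs⟩ := hsub
    have hch : Chain Q' A d := by
      have h1 : Chain Qn (⊤ : Subgroup A) d := ⟨c, h0, hl, hs⟩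
      have h2 := h1.map A.subtype
      rwa [← MonoidHom.range_eq_map, A.range_subtype] at h2
    set R' := ⨆ a : A, conjSubgroup (a : G) (S i ⊓ A) with hR'def
    have hR'A : R' ≤ A := by
      apply iSup_le
      intro a
      apply conj_le
      intro s hs
      exact mul_mem (mul_mem a.2 (Subgroup.mem_inf.1 hs).2) (inv_mem a.2)
    have hR'conj : ∀ x ∈ A, ∀ r ∈ R', x * r * x⁻¹ ∈ R' := by
      intro x hx r hr
      have h1 : conjSubgroup x R' ≤ R' := by
        rw [hR'def]
        rw [conjSubgroup, Subgroup.map_iSup]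
        apply iSup_le
        intro a
        show conjSubgroup x (conjSubgroup (a : G) (S i ⊓ A)) ≤ _
        rw [conj_conj]
        have h2 : x * (a : G) = ((⟨x, hx⟩ * a : A) : G) := rfl
        rw [h2]
        exact le_iSup (fun b : A => conjSubgroup (b : G) (S i ⊓ A)) _
      exact h1 (conj_mem hr)
    have hR'NN : R' ≤ Subgroup.normalizer (S i : Set G) := by
      apply iSup_le
      intro a
      intro y hy
      rcases mem_conj.1 hy with ⟨s, hs, rfl⟩
      obtain ⟨j, hj⟩ := hperm (a : G) i
      have hySj : (a : G) * s * (a : G)⁻¹ ∈ S j := by rw [← hj]; exact conj_mem (Subgroup.mem_inf.1 hs).1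
      by_cases hji : j = i
      · exact Subgroup.le_normalizer (by rw [← hji]; exact hySj)
      · apply mem_normalizer_of_conj_eq
        apply conj_eq_of_centralizes
        intro u hu
        exact (hcomm i j (fun h => hji h.symm) u hu _ hySj).symm
    by_cases hQR : Q' ≤ R'
    · exact hQR.trans hR'NN
    · have hcent := lemA hch hq' hR'A hR'conj hQR
      intro x hx
      obtain ⟨j, hj⟩ := hperm x i
      by_cases hji : j = i
      · exact mem_normalizer_of_conj_eq (by rw [← hji] at hj ⊢; exact hj)
      · exfalso
        obtain ⟨q, hqprime, hqp, a, haK, horda⟩ := exists_prime_order (hA 2 Nat.prime_two)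
        have ha1 : a ≠ 1 := by
          intro h
          rw [h, orderOf_one] at horda
          have := hqprime.one_lt
          omega
        have haR' : a ∈ R' := by
          have h1 : a ∈ conjSubgroup ((1 : A) : G) (S i ⊓ A) := by
            rw [OneMemClass.coe_one, conj_one]
            exact haK
          exact le_iSup (fun b : A => conjSubgroup (b : G) (S i ⊓ A)) 1 h1
        have hc2 := hcent x hx a haR'
        have h1 : x * a * x⁻¹ ∈ S j := by rw [← hj]; exact conj_mem (Subgroup.mem_inf.1 haK).1
        have h2 : x * a * x⁻¹ = a := by rw [hc2]; group
        exact ha1 (hdisj j hji a (Subgroup.mem_inf.1 haK).1 (h2 ▸ h1))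

end L33


/-- **Lemma 3.3.** In a coprimely factorized finite group `G = AB` with trivial
soluble radical and `F*(G) = S 1 × ⋯ × S m` a direct product of nonabelian
simple subgroups permuted by `G`: if `S i ⊓ A` is not a `p`-group for any
prime `p`, then `S i` is normalized by `F*(A)`; similarly for `B`. -/
theorem normalized_by_generalizedFitting_of_not_isPGroup
{G : Type*} [Group G] [Finite G] (A B : Subgroup G)
    (hfact : ∀ g : G, ∃ a ∈ A, ∃ b ∈ B, g = a * b)
    (hcop : Nat.Coprime (Nat.card A) (Nat.card B))
    (hrad : solubleRadical G = ⊥)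
    (m : ℕ) (S : Fin m → Subgroup G)
    (hsimple : ∀ i, IsSimpleGroup (S i))
    (hna : ∀ i, ∃ a b : S i, a * b ≠ b * a)
    (hindep : iSupIndep S)
    (hsup : ⨆ i, S i = generalizedFitting G)
    (hcomm : ∀ i j, i ≠ j → ∀ x ∈ S i, ∀ y ∈ S j, x * y = y * x)
    (hperm : ∀ (g : G) (i : Fin m), ∃ j, conjSubgroup g (S i) = S j) :
    ∀ i : Fin m,
      ((¬ ∃ p : ℕ, p.Prime ∧ IsPGroup p (S i ⊓ A : Subgroup G)) →
        Subgroup.map A.subtype (generalizedFitting A) ≤ Subgroup.normalizer (S i : Set G)) ∧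
      ((¬ ∃ p : ℕ, p.Prime ∧ IsPGroup p (S i ⊓ B : Subgroup G)) →
        Subgroup.map B.subtype (generalizedFitting B) ≤ Subgroup.normalizer (S i : Set G)) := by
  intro i
  constructor
  · intro hAi
    exact L33.main_side S A hindep hcomm hperm i hAi
  · intro hBi
    exact L33.main_side S B hindep hcomm hperm i hBi
end
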